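/- Every cobipartite circle graph (a circle graph whose vertex set can be partitioned into two cliques) is a permutation graph. -/

import Mathlib

open SimpleGraph

/-- The circle on which chord diagrams live (the unit circle as an additive circle). -/
abbrev Circ : Type := AddCircle (1 : ℝ)

/-- A circle representation of a graph `G`: each vertex `v` gets a chord with
distinct endpoints `p v` and `q v`, all `2|V|` endpoints are distinct, and two
distinct vertices are adjacent iff their chords cross (i.e. exactly one endpoint
of one chord lies strictly inside an arc determined by the other chord). -/
structure CircleRep (V : Type) (G : SimpleGraph V) where
  p : V → Circ
  q : V → Circ
  inj : Function.Injective (Sum.elim p q)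
  adj : ∀ u v : V, G.Adj u v ↔ u ≠ v ∧
    Xor' (sbtw (p v) (p u) (q v)) (sbtw (p v) (q u) (q v))

namespace CircleRep

variable {V : Type} {G : SimpleGraph V} (R : CircleRep V G)

/-- The two open arcs of the chord of `v`: `b = true` is the arc from `p v`
clockwise to `q v`, `b = false` is the other arc. -/
def ArcSet (v : V) (b : Bool) : Set Circ :=
  if b then {x | sbtw (R.p v) x (R.q v)} else {x | sbtw (R.q v) x (R.p v)}

/-- The arc `b` of the chord of `v` is empty: it contains both endpoints of no chord. -/
def ArcEmpty (v : V) (b : Bool) : Prop :=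
  ∀ u : V, ¬ (R.p u ∈ R.ArcSet v b ∧ R.q u ∈ R.ArcSet v b)

/-- A chord is peripheral if one of its arcs is empty. -/
def Peripheral (v : V) : Prop := ∃ b : Bool, R.ArcEmpty v b

/-- A set `T` of corner points satisfies the chord of `v` if each of the two
arcs of the chord contains a corner. -/
def SatChord (T : Finset Circ) (v : V) : Prop :=
  (∃ t ∈ T, t ∈ R.ArcSet v true) ∧ (∃ t ∈ T, t ∈ R.ArcSet v false)

/-- `T` is a satisfying set of corners: the corners are distinct from all chord
endpoints and every chord has a corner in each of its arcs. -/
def GoodCorners (T : Finset Circ) : Prop :=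
  (∀ t ∈ T, ∀ v : V, t ≠ R.p v ∧ t ≠ R.q v) ∧ ∀ v : V, R.SatChord T v

/-- The polygon number `ψ_r` of a circle representation: the minimum number of
corners that must be added to satisfy all chords. -/
noncomputable def polyNum : ℕ :=
  sInf {k | ∃ T : Finset Circ, T.card = k ∧ R.GoodCorners T}

/-- `c 0, …, c (ℓ-1)` is an ℓ-independent set in series: there is a point `x`
on the circle such that a clockwise traversal starting at `x` encounters both
endpoints of `c i` before both endpoints of `c j` whenever `i < j`. -/
def SeriesIndep {ℓ : ℕ} (c : Fin ℓ → V) : Prop :=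
  Function.Injective c ∧ ∃ x : Circ,
    (∀ i : Fin ℓ, x ≠ R.p (c i) ∧ x ≠ R.q (c i)) ∧
    ∀ i j : Fin ℓ, i < j →
      ∀ e ∈ ({R.p (c i), R.q (c i)} : Set Circ),
        ∀ f ∈ ({R.p (c j), R.q (c j)} : Set Circ), sbtw x e f

end CircleRep

/-- The polygon number `ψ(G)`: the minimum `k` such that `G` has a circle
representation together with `k` corners satisfying all chords. -/
noncomputable def polygonNumber {V : Type} (G : SimpleGraph V) : ℕ :=
  sInf {k | ∃ R : CircleRep V G, ∃ T : Finset Circ, T.card = k ∧ R.GoodCorners T}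

/-- A permutation graph: a graph having a circle representation admitting two
corner points such that each chord has one corner in each of its arcs. -/
def IsPermutationGraph {V : Type} (G : SimpleGraph V) : Prop :=
  ∃ R : CircleRep V G, ∃ T : Finset Circ, T.card = 2 ∧ R.GoodCorners T

/-- The clique cover number `κ(G)`: least `n` such that the vertex set can be
partitioned into `n` cliques. -/
noncomputable def cliqueCoverNumber {V : Type} (G : SimpleGraph V) : ℕ :=
  sInf {n | ∃ f : V → Fin n, ∀ u v : V, f u = f v → u = v ∨ G.Adj u v}

/-- The independence number `α(G)`. -/
noncomputable def indepNumber {V : Type} (G : SimpleGraph V) : ℕ :=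
  sSup {n | ∃ s : Finset V, (∀ u ∈ s, ∀ v ∈ s, u ≠ v → ¬ G.Adj u v) ∧ s.card = n}

/-- `A` is an asteroidal set of `G`: for every `a ∈ A`, any two vertices of
`A \ {a}` are connected by a path in `G - N[a]`. -/
def IsAsteroidal {V : Type} (G : SimpleGraph V) (A : Set V) : Prop :=
  ∀ a ∈ A, ∀ x ∈ A, ∀ y ∈ A, x ≠ a → y ≠ a →
    ∃ (hx : x ∈ {w | w ≠ a ∧ ¬ G.Adj a w}) (hy : y ∈ {w | w ≠ a ∧ ¬ G.Adj a w}),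
      (G.induce {w | w ≠ a ∧ ¬ G.Adj a w}).Reachable ⟨x, hx⟩ ⟨y, hy⟩

/-- The asteroidal number `an(G)`: maximum size of an asteroidal set. -/
noncomputable def asteroidalNumber {V : Type} (G : SimpleGraph V) : ℕ :=
  sSup {n | ∃ A : Finset V, IsAsteroidal G ↑A ∧ A.card = n}

/-- `G` is AT-free: it has no asteroidal triple. -/
def ATFree {V : Type} (G : SimpleGraph V) : Prop :=
  ¬ ∃ a b c : V, a ≠ b ∧ a ≠ c ∧ b ≠ c ∧ IsAsteroidal G {a, b, c}

/-- `G` is distance hereditary: in every connected induced subgraph, distances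
agree with those of `G`. -/
def DistanceHereditary {V : Type} (G : SimpleGraph V) : Prop :=
  ∀ s : Set V, (G.induce s).Connected →
    ∀ u v : ↥s, (G.induce s).dist u v = G.dist (u : V) (v : V)

/-- `{V1, V2}` is a split of `G`. -/
def IsSplit {V : Type} (G : SimpleGraph V) (V1 V2 : Set V) : Prop :=
  V1 ∪ V2 = Set.univ ∧ Disjoint V1 V2 ∧ 1 < V1.ncard ∧ 1 < V2.ncard ∧
    ∀ x ∈ V1, ∀ y ∈ V2,
      (G.Adj x y ↔ (∃ y' ∈ V2, G.Adj x y') ∧ (∃ x' ∈ V1, G.Adj x' y))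


namespace Stmt6Aux
open Finset


noncomputable def rep (z : Circ) : ℝ := (AddCircle.equivIco 1 0 z : ℝ)

theorem rep_mem (z : Circ) : rep z ∈ Set.Ico (0:ℝ) 1 := by
  have := (AddCircle.equivIco 1 0 z).2
  simpa [rep] using this

theorem coe_rep (z : Circ) : ((rep z : ℝ) : Circ) = z := by
  have h := (AddCircle.equivIco 1 0).left_inv z
  have : (AddCircle.equivIco 1 0).symm (AddCircle.equivIco 1 0 z) = z := h
  rwa [AddCircle.equivIco, QuotientAddGroup.equivIcoMod_symm_apply] at this

theorem rep_inj : Function.Injective rep := by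
  intro a b h
  rw [← coe_rep a, ← coe_rep b, h]

theorem sbtw_of_lt {X Y Z : ℝ} (h1 : X < Y) (h2 : Y < Z) (h3 : Z < X + 1) :
    sbtw (X : Circ) (Y : Circ) (Z : Circ) := by
  have h01 : (0:ℝ) < 1 := one_pos
  rw [sbtw_iff_btw_not_btw]
  constructor
  · rw [QuotientAddGroup.btw_coe_iff]
    rw [(toIcoMod_eq_self h01).2 ⟨h1.le, by linarith⟩,
      (toIocMod_eq_self h01).2 ⟨by linarith, h3.le⟩]
    exact h2.le
  · rw [QuotientAddGroup.btw_coe_iff]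
    have e1 : toIcoMod h01 Z Y = Y + 1 := by
      rw [toIcoMod_eq_iff h01]
      exact ⟨⟨by linarith, by linarith⟩, -1, by rw [zsmul_eq_mul]; ring⟩
    have e2 : toIocMod h01 Z X = X + 1 := by
      rw [toIocMod_eq_iff h01]
      exact ⟨⟨by linarith, by linarith⟩, -1, by rw [zsmul_eq_mul]; ring⟩
    rw [e1, e2]
    push_neg
    linarith

theorem nsbtw_of_lt {X Y Z : ℝ} (h1 : X < Y) (h2 : Y < Z) (h3 : Z < X + 1) :
    ¬ sbtw (Y : Circ) (X : Circ) (Z : Circ) :=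
  sbtw_asymm (sbtw_cyclic_left (sbtw_cyclic_left (sbtw_of_lt h1 h2 h3)))

theorem coe_ne_coe {u w : ℝ} (h1 : u ≠ w) (h2 : |u - w| < 1) : (u : Circ) ≠ (w : Circ) := by
  intro h
  have : ((u - w : ℝ) : Circ) = 0 := by
    rw [QuotientAddGroup.mk_sub, h, sub_self]
  rw [AddCircle.coe_eq_zero_iff] at this
  obtain ⟨n, hn⟩ := this
  rw [zsmul_eq_mul, mul_one] at hn
  have h0 : n ≠ 0 := by rintro rfl; simp at hn; exact h1 (by linarith)
  have : (1:ℝ) ≤ |(n:ℝ)| := by exact_mod_cast Int.one_le_abs h0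
  rw [hn] at this; linarith [abs_sub_comm u w]

theorem coe_add_nat (x : ℝ) (m : ℕ) : ((x + m : ℝ) : Circ) = (x : Circ) := by
  have : (((m : ℝ)) : Circ) = 0 := by
    rw [AddCircle.coe_eq_zero_iff]
    exact ⟨m, by simp⟩
  rw [QuotientAddGroup.mk_add, this, add_zero]

theorem ivt_up (F : ℕ → ℕ) (hstep : ∀ i, F (i+1) ≤ F i + 1) (c s : ℕ) :
    ∀ t, s ≤ t → F s ≤ c → c ≤ F t → ∃ i, s ≤ i ∧ i ≤ t ∧ F i = c := by
  intro t
  induction t with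
  | zero =>
    intro hst h1 h2
    have hs0 : s = 0 := Nat.le_zero.mp hst
    subst hs0
    exact ⟨0, le_rfl, le_rfl, le_antisymm h1 h2⟩
  | succ t ih =>
    intro hst h1 h2
    by_cases hc : c ≤ F t
    · by_cases hst' : s ≤ t
      · obtain ⟨i, hi1, hi2, hi3⟩ := ih hst' h1 hc
        exact ⟨i, hi1, hi2.trans (Nat.le_succ t), hi3⟩
      · have hs : s = t + 1 := by omega
        subst hs
        exact ⟨t+1, le_rfl, le_rfl, le_antisymm h1 h2⟩
    · have : F (t+1) = c := by have := hstep t; omega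
      exact ⟨t+1, hst, le_rfl, this⟩

theorem ivt_down (F : ℕ → ℕ) (hstep : ∀ i, F i ≤ F (i+1) + 1) (c s : ℕ) :
    ∀ t, s ≤ t → F t ≤ c → c ≤ F s → ∃ i, s ≤ i ∧ i ≤ t ∧ F i = c := by
  intro t
  induction t with
  | zero =>
    intro hst h1 h2
    have hs0 : s = 0 := Nat.le_zero.mp hst
    subst hs0
    exact ⟨0, le_rfl, le_rfl, le_antisymm h1 h2⟩
  | succ t ih =>
    intro hst h1 h2
    by_cases hc : F t ≤ c
    · by_cases hst' : s ≤ t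
      · obtain ⟨i, hi1, hi2, hi3⟩ := ih hst' hc h2
        exact ⟨i, hi1, hi2.trans (Nat.le_succ t), hi3⟩
      · have hs : s = t + 1 := by omega
        subst hs
        exact ⟨t+1, le_rfl, le_rfl, le_antisymm h1 h2⟩
    · have : F (t+1) = c := by have := hstep t; omega
      exact ⟨t+1, hst, le_rfl, this⟩


theorem coe_add_one (x : ℝ) : ((x + 1 : ℝ) : Circ) = (x : Circ) := by
  simpa using coe_add_nat x 1

theorem pigeon {V : Type} (AF : Finset V) (cnt : V → ℕ)
    (hle : ∀ v, cnt v ≤ 2)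
    (hsum : ∑ v ∈ AF, cnt v = AF.card)
    (hgeo : ∀ v₀ v₁, v₀ ∈ AF → v₁ ∈ AF → v₀ ≠ v₁ → cnt v₀ = 2 → cnt v₁ = 0 → False) :
    ∀ v ∈ AF, cnt v = 1 := by
  intro v hv
  by_contra hne
  rcases Nat.lt_or_ge (cnt v) 1 with h0' | h1'
  · have h0 : cnt v = 0 := by omega
    have hex : ∃ v₁ ∈ AF, 2 ≤ cnt v₁ := by
      by_contra hc
      push_neg at hc
      have hlt : ∑ w ∈ AF, cnt w < ∑ w ∈ AF, 1 :=
        Finset.sum_lt_sum (fun i hi => by have := hc i hi; omega) ⟨v, hv, by omega⟩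
      rw [hsum, Finset.sum_const, smul_eq_mul, mul_one] at hlt
      omega
    obtain ⟨v₁, hv₁, h2⟩ := hex
    exact hgeo v₁ v hv₁ hv (fun h => by rw [h, h0] at h2; omega)
      (by have := hle v₁; omega) h0
  · have h2 : cnt v = 2 := by have := hle v; omega
    have hex : ∃ v₁ ∈ AF, cnt v₁ = 0 := by
      by_contra hc
      push_neg at hc
      have hlt : ∑ w ∈ AF, (1:ℕ) < ∑ w ∈ AF, cnt w :=
        Finset.sum_lt_sum (fun i hi => by have := hc i hi; omega) ⟨v, hv, by omega⟩
      rw [hsum, Finset.sum_const, smul_eq_mul, mul_one] at hlt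
      omega
    obtain ⟨v₁, hv₁, h0⟩ := hex
    exact hgeo v v₁ hv hv₁ (fun h => by rw [← h, h2] at h0; omega) h2 h0

theorem core {W : Type} [Fintype W] [DecidableEq W] (n k : ℕ) (hn : 0 < n)
    (hW : Fintype.card W = 2 * n) (E : W → ℝ) (hEinj : Function.Injective E)
    (hE01 : ∀ w, E w ∈ Set.Ico (0:ℝ) 1) (P : W → Prop) [DecidablePred P]
    (hP : (Finset.univ.filter P).card = 2 * k) :
    ∃ (x' y' : ℝ) (u : W → ℝ), x' < y' ∧ y' < x' + 1 ∧
      (∀ w, ((u w : ℝ) : Circ) = ((E w : ℝ) : Circ)) ∧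
      (∀ w, x' < u w ∧ u w < x' + 1 ∧ u w ≠ y') ∧
      Function.Injective u ∧
      (Finset.univ.filter (fun w => u w < y')).card = n ∧
      (Finset.univ.filter (fun w => u w < y' ∧ P w)).card = k := by
  classical
  set N := 2 * n with hN
  have hN0 : 0 < N := by omega
  set S : Finset ℝ := Finset.univ.image E with hSdef
  have hES : ∀ w, E w ∈ S := fun w => Finset.mem_image_of_mem E (Finset.mem_univ w)
  have hScard : S.card = N := by
    rw [hSdef, Finset.card_image_of_injective _ hEinj, Finset.card_univ, hW]
  set σ := S.orderIsoOfFin hScard with hσ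
  have hσ01 : ∀ i : Fin N, (σ i : ℝ) ∈ Set.Ico (0:ℝ) 1 := by
    intro i
    have h1 : (σ i : ℝ) ∈ S := (σ i).2
    obtain ⟨w, _, hw⟩ := Finset.mem_image.mp h1
    rw [← hw]; exact hE01 w
  set g : ℕ → ℝ := fun j => (σ ⟨j % N, Nat.mod_lt j hN0⟩ : ℝ) with hg
  have hgper : ∀ j, g (j + N) = g j := by
    intro j; simp only [hg, Nat.add_mod_right]
  have hg01 : ∀ j, g j ∈ Set.Ico (0:ℝ) 1 := fun j => hσ01 _
  have hgmono : ∀ {j1 j2 : ℕ}, j1 < j2 → j2 < N → g j1 < g j2 := by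
    intro j1 j2 h12 h2
    have hlt : (⟨j1 % N, Nat.mod_lt j1 hN0⟩ : Fin N) < ⟨j2 % N, Nat.mod_lt j2 hN0⟩ := by
      rw [Fin.lt_def]
      simp only [Nat.mod_eq_of_lt (h12.trans h2), Nat.mod_eq_of_lt h2]
      exact h12
    exact Subtype.coe_lt_coe.mpr (σ.strictMono hlt)
  have hginj : ∀ {j1 j2 : ℕ}, j1 < N → j2 < N → g j1 = g j2 → j1 = j2 := by
    intro j1 j2 h1 h2 he
    rcases lt_trichotomy j1 j2 with h | h | h
    · exact absurd he (ne_of_lt (hgmono h h2))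
    · exact h
    · exact absurd he.symm (ne_of_lt (hgmono h h1))
  set f : ℕ → ℝ := fun j => g j + (j / N : ℕ) with hf
  have hfsucc : ∀ j, f j < f (j + 1) := by
    intro j
    have hjm : j % N < N := Nat.mod_lt j hN0
    have hj : N * (j / N) + j % N = j := Nat.div_add_mod j N
    rcases Nat.lt_or_ge (j % N + 1) N with h | h
    · have e1 : (j + 1) % N = j % N + 1 := by
        conv_lhs => rw [← hj]
        rw [add_assoc, Nat.mul_add_mod, Nat.mod_eq_of_lt h]
      have e2 : (j + 1) / N = j / N := by
        conv_lhs => rw [← hj]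
        rw [add_assoc, Nat.mul_add_div hN0, Nat.div_eq_of_lt h, add_zero]
      show g j + ((j / N : ℕ) : ℝ) < g (j+1) + (((j+1) / N : ℕ) : ℝ)
      rw [e2]
      have hgmod : ∀ i : ℕ, g i = g (i % N) := by
        intro i
        simp only [hg, Nat.mod_mod_of_dvd i dvd_rfl]
      have : g j < g (j + 1) := by
        rw [hgmod j, hgmod (j+1), e1]
        exact hgmono (Nat.lt_succ_self _) h
      linarith
    · have hje : j % N + 1 = N := by omega
      have e0' : j + 1 = N * (j / N) + N := by omega
      have e0 : j + 1 = N * (j / N + 1) := by rw [Nat.mul_add, Nat.mul_one]; exact e0'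
      have e1 : (j + 1) % N = 0 := by rw [e0, Nat.mul_mod_right]
      have e2 : (j + 1) / N = j / N + 1 := by rw [e0, Nat.mul_div_cancel_left _ hN0]
      show g j + ((j / N : ℕ) : ℝ) < g (j+1) + (((j+1) / N : ℕ) : ℝ)
      rw [e2]
      have h1 : g j < 1 := (hg01 j).2
      have h2 : 0 ≤ g (j+1) := (hg01 (j+1)).1
      push_cast
      linarith
  have hfmono : StrictMono f := strictMono_nat_of_lt_succ hfsucc
  have hfN : ∀ j, f (j + N) = f j + 1 := by
    intro j
    show g (j + N) + (((j + N) / N : ℕ) : ℝ) = g j + ((j / N : ℕ) : ℝ) + 1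
    rw [hgper, Nat.add_div_right _ hN0]
    push_cast
    ring
  clear_value f
  -- index of an endpoint in the sorted order
  set ridx : W → ℕ := fun w => ((σ.symm ⟨E w, hES w⟩ : Fin N) : ℕ) with hridx
  have hrlt : ∀ w, ridx w < N := fun w => (σ.symm ⟨E w, hES w⟩).isLt
  have hgr : ∀ w, g (ridx w) = E w := by
    intro w
    have h1 : (⟨ridx w % N, Nat.mod_lt _ hN0⟩ : Fin N) = σ.symm ⟨E w, hES w⟩ := by
      apply Fin.ext
      simp only [hridx, Nat.mod_eq_of_lt (hrlt w)]
      exact Nat.mod_eq_of_lt (hrlt w)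
    show (σ ⟨ridx w % N, Nat.mod_lt _ hN0⟩ : ℝ) = E w
    rw [h1, σ.apply_symm_apply]
  have hrinj : ∀ w1 w2, ridx w1 = ridx w2 → w1 = w2 := by
    intro w1 w2 h
    apply hEinj
    rw [← hgr w1, ← hgr w2, h]
  -- the A-endpoint predicate on indices
  set SA : Finset ℝ := (Finset.univ.filter P).image E with hSA
  have hSAmem : ∀ w, E w ∈ SA ↔ P w := by
    intro w
    constructor
    · intro h
      obtain ⟨w', hw', he⟩ := Finset.mem_image.mp h
      rw [← hEinj he]
      exact (Finset.mem_filter.mp hw').2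
    · intro h
      exact Finset.mem_image_of_mem E (Finset.mem_filter.mpr ⟨Finset.mem_univ w, h⟩)
  set isA : ℕ → Prop := fun j => g j ∈ SA with hisA
  have hisAper : ∀ j, isA (j + N) ↔ isA j := by
    intro j; simp only [hisA, hgper]
  -- base window count
  have hwin0 : (((Finset.range N)).filter isA).card = 2 * k := by
    rw [← hP]
    symm
    apply Finset.card_bij (fun w _ => ridx w)
    · intro w hw
      rw [Finset.mem_filter]
      refine ⟨Finset.mem_range.mpr (hrlt w), ?_⟩
      show g (ridx w) ∈ SA
      rw [hgr w, hSAmem]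
      exact (Finset.mem_filter.mp hw).2
    · intro w1 h1 w2 h2 h
      exact hrinj _ _ h
    · intro j hj
      rw [Finset.mem_filter, Finset.mem_range] at hj
      obtain ⟨hjN, hjA⟩ := hj
      have : g j ∈ SA := hjA
      rw [hSA] at this
      obtain ⟨w, hw, he⟩ := Finset.mem_image.mp this
      refine ⟨w, hw, ?_⟩
      apply hginj (hrlt w) hjN
      rw [hgr w, he]
  -- all window counts
  have hwin : ∀ i, (((Finset.Ico i (i+N))).filter isA).card = 2 * k := by
    intro i
    induction i with
    | zero =>
      have e0 : Finset.Ico 0 (0+N) = Finset.range N := by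
        rw [Finset.range_eq_Ico]; congr 1; omega
      rw [e0]; exact hwin0
    | succ i ih =>
      have hii : i < i + N := by omega
      have e1 : Finset.Ico i (i+N) = insert i (Finset.Ico (i+1) (i+N)) :=
        (Finset.insert_Ico_add_one_left_eq_Ico hii).symm
      have e2 : Finset.Ico (i+1) (i+1+N) = insert (i+N) (Finset.Ico (i+1) (i+N)) := by
        have h3 : i+1+N = (i+N)+1 := by omega
        rw [h3, Finset.Ico_add_one_right_eq_Icc, ← Finset.Ico_insert_right (by omega : i+1 ≤ i+N)]
      have hnotmem1 : i ∉ Finset.Ico (i+1) (i+N) := by simp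
      have hnotmem2 : i+N ∉ Finset.Ico (i+1) (i+N) := by simp
      rw [e1] at ih
      rw [e2]
      rw [Finset.filter_insert] at ih ⊢
      by_cases hA : isA i
      · have hA' : isA (i + N) := (hisAper i).mpr hA
        rw [if_pos hA] at ih
        rw [if_pos hA']
        rw [Finset.card_insert_of_notMem (fun hc => hnotmem1 (Finset.mem_of_mem_filter _ hc))] at ih
        rw [Finset.card_insert_of_notMem (fun hc => hnotmem2 (Finset.mem_of_mem_filter _ hc))]
        exact ih
      · have hA' : ¬ isA (i + N) := fun hc => hA ((hisAper i).mp hc)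
        rw [if_neg hA] at ih
        rw [if_neg hA']
        exact ih
  -- the sliding count
  set a : ℕ → ℕ := fun i => (((Finset.Ico i (i+n))).filter isA).card with ha
  have hsplit : ∀ i, a i + a (i+n) = 2 * k := by
    intro i
    have hu : Finset.Ico i (i+n) ∪ Finset.Ico (i+n) (i+n+n) = Finset.Ico i (i+N) := by
      rw [Finset.Ico_union_Ico_eq_Ico (by omega) (by omega)]
      congr 1
      omega
    have hd : Disjoint ((Finset.Ico i (i+n)).filter isA) ((Finset.Ico (i+n) (i+n+n)).filter isA) :=
      Finset.disjoint_filter_filter (Finset.Ico_disjoint_Ico_consecutive i (i+n) (i+n+n))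
    calc a i + a (i+n) = (((Finset.Ico i (i+n)).filter isA) ∪ ((Finset.Ico (i+n) (i+n+n)).filter isA)).card := by
          rw [Finset.card_union_of_disjoint hd]
      _ = 2 * k := by rw [← Finset.filter_union, hu]; exact hwin i
  have hstep_up : ∀ i, a (i+1) ≤ a i + 1 := by
    intro i
    simp only [ha]
    have e2 : Finset.Ico (i+1) (i+1+n) ⊆ insert (i+n) (Finset.Ico (i+1) (i+n)) := by
      intro j hj
      rw [Finset.mem_Ico] at hj
      rw [Finset.mem_insert, Finset.mem_Ico]
      omega
    calc ((Finset.Ico (i+1) (i+1+n)).filter isA).card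
        ≤ ((insert (i+n) (Finset.Ico (i+1) (i+n))).filter isA).card :=
          Finset.card_le_card (Finset.filter_subset_filter _ e2)
      _ ≤ ((Finset.Ico (i+1) (i+n)).filter isA).card + 1 := by
          rw [Finset.filter_insert]
          by_cases hA : isA (i+n)
          · rw [if_pos hA]; exact Finset.card_insert_le _ _
          · rw [if_neg hA]; omega
      _ ≤ ((Finset.Ico i (i+n)).filter isA).card + 1 := by
          have hss : Finset.Ico (i+1) (i+n) ⊆ Finset.Ico i (i+n) := by
            intro j hj; rw [Finset.mem_Ico] at *; omega
          have := Finset.card_le_card (Finset.filter_subset_filter isA hss)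
          omega
  have hstep_down : ∀ i, a i ≤ a (i+1) + 1 := by
    intro i
    simp only [ha]
    have e2 : Finset.Ico i (i+n) ⊆ insert i (Finset.Ico (i+1) (i+1+n)) := by
      intro j hj
      rw [Finset.mem_Ico] at hj
      rw [Finset.mem_insert, Finset.mem_Ico]
      omega
    calc ((Finset.Ico i (i+n)).filter isA).card
        ≤ ((insert i (Finset.Ico (i+1) (i+1+n))).filter isA).card :=
          Finset.card_le_card (Finset.filter_subset_filter _ e2)
      _ ≤ ((Finset.Ico (i+1) (i+1+n)).filter isA).card + 1 := by
          rw [Finset.filter_insert]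
          by_cases hA : isA i
          · rw [if_pos hA]; exact Finset.card_insert_le _ _
          · rw [if_neg hA]; omega
  -- intermediate value: find the balanced window
  have hIVT : ∃ i, 1 ≤ i ∧ i ≤ 1 + n ∧ a i = k := by
    have hsum := hsplit 1
    rcases le_or_gt (a 1) k with h | h
    · exact ivt_up a hstep_up k 1 (1+n) (by omega) h (by omega)
    · exact ivt_down a hstep_down k 1 (1+n) (by omega) (by omega) h.le
  obtain ⟨i₀, hi₀1, hi₀2, hai₀⟩ := hIVT
  obtain ⟨i₁, rfl⟩ : ∃ i₁, i₀ = i₁ + 1 := ⟨i₀ - 1, by omega⟩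
  have hi₁N : i₁ + 1 ≤ N := by omega
  -- the two corner positions
  obtain ⟨x', hx'1, hx'2⟩ : ∃ x', f i₁ < x' ∧ x' < f (i₁+1) :=
    ⟨(f i₁ + f (i₁+1))/2, by linarith [hfsucc i₁], by linarith [hfsucc i₁]⟩
  obtain ⟨y', hy'1, hy'2⟩ : ∃ y', f (i₁+n) < y' ∧ y' < f (i₁+n+1) :=
    ⟨(f (i₁+n) + f (i₁+n+1))/2, by linarith [hfsucc (i₁+n)], by linarith [hfsucc (i₁+n)]⟩
  have hxy : x' < y' := by
    have h1 : f (i₁+1) ≤ f (i₁+n) := hfmono.monotone (by omega)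
    linarith
  have hyx : y' < x' + 1 := by
    have h1 : f (i₁+n+1) ≤ f (i₁ + N) := hfmono.monotone (by omega)
    have h2 := hfN i₁
    linarith
  -- the unrolled position of each endpoint
  set jdx : W → ℕ := fun w => if ridx w < i₁ + 1 then ridx w + N else ridx w with hjdx
  have hjlow : ∀ w, i₁ + 1 ≤ jdx w := by
    intro w
    rw [hjdx]
    dsimp only
    split
    · omega
    · omega
  have hjhigh : ∀ w, jdx w ≤ i₁ + N := by
    intro w
    have := hrlt w
    rw [hjdx]
    dsimp only
    split
    · omega
    · omega
  have hgj : ∀ w, g (jdx w) = E w := by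
    intro w
    rw [hjdx]
    dsimp only
    split
    · rw [hgper, hgr]
    · rw [hgr]
  have hjinj : Function.Injective jdx := by
    intro w1 w2 h
    apply hEinj
    rw [← hgj w1, ← hgj w2, h]
  set u : W → ℝ := fun w => f (jdx w) with hu
  have huπ : ∀ w, ((u w : ℝ) : Circ) = ((E w : ℝ) : Circ) := by
    intro w
    simp only [hu, hf]
    rw [coe_add_nat, hgj]
  have hulow : ∀ w, x' < u w := by
    intro w
    have h1 : f (i₁+1) ≤ f (jdx w) := hfmono.monotone (hjlow w)
    have : u w = f (jdx w) := rfl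
    linarith
  have huhigh : ∀ w, u w < x' + 1 := by
    intro w
    have h1 : f (jdx w) ≤ f (i₁ + N) := hfmono.monotone (hjhigh w)
    have h2 := hfN i₁
    have : u w = f (jdx w) := rfl
    linarith
  have huy : ∀ w, (u w < y' ↔ jdx w < i₁ + 1 + n) := by
    intro w
    constructor
    · intro h
      by_contra hc
      have : f (i₁+n+1) ≤ f (jdx w) := hfmono.monotone (by omega)
      have : u w = f (jdx w) := rfl
      linarith
    · intro h
      have : f (jdx w) ≤ f (i₁+n) := hfmono.monotone (by omega)
      have : u w = f (jdx w) := rfl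
      linarith
  have huy' : ∀ w, u w ≠ y' := by
    intro w
    by_cases h : jdx w < i₁ + 1 + n
    · have : f (jdx w) ≤ f (i₁+n) := hfmono.monotone (by omega)
      have : u w = f (jdx w) := rfl
      intro hc; linarith
    · have : f (i₁+n+1) ≤ f (jdx w) := hfmono.monotone (by omega)
      have : u w = f (jdx w) := rfl
      intro hc; linarith
  have huinj : Function.Injective u := fun w1 w2 h => hjinj (hfmono.injective h)
  -- surjectivity of jdx onto the window
  have hjsurj : ∀ j, i₁ + 1 ≤ j → j < i₁ + 1 + N → ∀ w, E w = g j → jdx w = j := by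
    intro j hj1 hj2 w hw
    have hr : ridx w = j % N := by
      apply hginj (hrlt w) (Nat.mod_lt j hN0)
      rw [hgr w, hw]
      conv_lhs => rw [show g j = g (j % N) from by
        simp only [hg, Nat.mod_mod_of_dvd j dvd_rfl]]
    rcases Nat.lt_or_ge j N with h | h
    · have : j % N = j := Nat.mod_eq_of_lt h
      rw [hjdx]
      dsimp only
      rw [hr, this, if_neg (by omega)]
    · have h2 : j % N = j - N := by
        rw [Nat.mod_eq_sub_mod h, Nat.mod_eq_of_lt (by omega)]
      rw [hjdx]
      dsimp only
      rw [hr, h2, if_pos (by omega)]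
      omega
  -- transfer counts
  have hcount1 : (Finset.univ.filter (fun w => jdx w < i₁ + 1 + n ∧ P w)).card = k := by
    rw [← hai₀]
    apply Finset.card_bij (fun w _ => jdx w)
    · intro w hw
      rw [Finset.mem_filter] at hw
      rw [Finset.mem_filter, Finset.mem_Ico]
      refine ⟨⟨hjlow w, hw.2.1⟩, ?_⟩
      show g (jdx w) ∈ SA
      rw [hgj w, hSAmem]
      exact hw.2.2
    · intro w1 _ w2 _ h
      exact hjinj h
    · intro j hj
      rw [Finset.mem_filter, Finset.mem_Ico] at hj
      obtain ⟨⟨hj1, hj2⟩, hjA⟩ := hj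
      have : g j ∈ SA := hjA
      rw [hSA] at this
      obtain ⟨w, hw, he⟩ := Finset.mem_image.mp this
      have hjw : jdx w = j := hjsurj j hj1 (by omega) w he
      refine ⟨w, ?_, hjw⟩
      rw [Finset.mem_filter]
      exact ⟨Finset.mem_univ w, by rw [hjw]; exact hj2, (Finset.mem_filter.mp hw).2⟩
  have hcount2 : (Finset.univ.filter (fun w => jdx w < i₁ + 1 + n)).card = n := by
    trans (Finset.Ico (i₁+1) (i₁+1+n)).card
    swap
    · rw [Nat.card_Ico]; omega
    apply Finset.card_bij (fun w _ => jdx w)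
    · intro w hw
      rw [Finset.mem_filter] at hw
      rw [Finset.mem_Ico]
      exact ⟨hjlow w, hw.2⟩
    · intro w1 _ w2 _ h
      exact hjinj h
    · intro j hj
      rw [Finset.mem_Ico] at hj
      have hjS : g j ∈ S := (σ ⟨j % N, Nat.mod_lt j hN0⟩).2
      rw [hSdef] at hjS
      obtain ⟨w, _, he⟩ := Finset.mem_image.mp hjS
      have hjw : jdx w = j := hjsurj j hj.1 (by omega) w he
      exact ⟨w, Finset.mem_filter.mpr ⟨Finset.mem_univ w, by rw [hjw]; exact hj.2⟩, hjw⟩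
  refine ⟨x', y', u, hxy, hyx, huπ, fun w => ⟨hulow w, huhigh w, huy' w⟩, huinj, ?_, ?_⟩
  · have he : Finset.univ.filter (fun w => u w < y') =
        Finset.univ.filter (fun w => jdx w < i₁ + 1 + n) :=
      Finset.filter_congr (fun w _ => by rw [huy w])
    rw [he, hcount2]
  · have he : Finset.univ.filter (fun w => u w < y' ∧ P w) =
        Finset.univ.filter (fun w => jdx w < i₁ + 1 + n ∧ P w) :=
      Finset.filter_congr (fun w _ => by rw [huy w])
    rw [he, hcount1]

end Stmt6Aux


/-- every cobipartite circle graph is a permutation graph. -/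
theorem stmt6 {V : Type} [Fintype V] (G : SimpleGraph V)
    (hcirc : Nonempty (CircleRep V G))
    (hco : ∃ A : Set V, (∀ u ∈ A, ∀ v ∈ A, u ≠ v → G.Adj u v) ∧
      (∀ u ∉ A, ∀ v ∉ A, u ≠ v → G.Adj u v)) :
    IsPermutationGraph G := by
  classical
  obtain ⟨R⟩ := hcirc
  obtain ⟨A, hA, hB⟩ := hco
  rcases isEmpty_or_nonempty V with hV | hV
  · -- empty graph
    have hne : (((0:ℝ)) : Circ) ≠ (((1/2 : ℝ)) : Circ) :=
      Stmt6Aux.coe_ne_coe (by norm_num) (by rw [abs_sub_lt_iff]; constructor <;> norm_num)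
    refine ⟨R, {(((0:ℝ)) : Circ), (((1/2:ℝ)) : Circ)}, ?_, ?_, ?_⟩
    · rw [Finset.card_insert_of_notMem (by rw [Finset.mem_singleton]; exact hne),
        Finset.card_singleton]
    · intro t _ v
      exact (hV.false v).elim
    · intro v
      exact (hV.false v).elim
  · -- main case
    set n := Fintype.card V with hn'
    have hn : 0 < n := Fintype.card_pos
    set E : V ⊕ V → ℝ := fun w => Stmt6Aux.rep (Sum.elim R.p R.q w) with hE
    have hEinj : Function.Injective E := fun w1 w2 h => R.inj (Stmt6Aux.rep_inj h)
    have hE01 : ∀ w, E w ∈ Set.Ico (0:ℝ) 1 := fun w => Stmt6Aux.rep_mem _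
    have hEπ : ∀ w, ((E w : ℝ) : Circ) = Sum.elim R.p R.q w := fun w => Stmt6Aux.coe_rep _
    have hcardW : Fintype.card (V ⊕ V) = 2 * n := by
      rw [Fintype.card_sum]; omega
    set AF : Finset V := Finset.univ.filter (fun v : V => v ∈ A) with hAF
    set BF : Finset V := Finset.univ.filter (fun v : V => v ∉ A) with hBF
    set k := AF.card with hk
    set m := BF.card with hm
    have hkm : k + m = n := by
      rw [hk, hm, hAF, hBF, Finset.card_filter_add_card_filter_not, Finset.card_univ]
    have hPcard : (Finset.univ.filter (fun w : V ⊕ V => Sum.elim id id w ∈ A)).card = 2 * k := by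
      rw [← Fintype.card_subtype]
      have e : {w : V ⊕ V // Sum.elim id id w ∈ A} ≃ {v : V // v ∈ A} ⊕ {v : V // v ∈ A} :=
        Equiv.subtypeSum.trans (Equiv.sumCongr
          (Equiv.subtypeEquivRight (fun v => Iff.rfl))
          (Equiv.subtypeEquivRight (fun v => Iff.rfl)))
      rw [Fintype.card_congr e, Fintype.card_sum, Fintype.card_subtype]
      rw [hk, hAF]
      omega
    obtain ⟨x', y', u, hxy, hyx, huπ, hbounds, huinj, htot, hcnt⟩ :=
      Stmt6Aux.core n k hn hcardW E hEinj hE01 (fun w : V ⊕ V => Sum.elim id id w ∈ A) hPcard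
    have hup : ∀ v : V, ((u (Sum.inl v) : ℝ) : Circ) = R.p v :=
      fun v => (huπ (Sum.inl v)).trans (hEπ (Sum.inl v))
    have huq : ∀ v : V, ((u (Sum.inr v) : ℝ) : Circ) = R.q v :=
      fun v => (huπ (Sum.inr v)).trans (hEπ (Sum.inr v))
    -- out-of-window endpoints are above y'
    have hout : ∀ w, ¬ (u w < y') → y' < u w :=
      fun w h => lt_of_le_of_ne (not_lt.mp h) (Ne.symm (hbounds w).2.2)
    -- geometric contradiction for a chord inside and a chord outside
    have hgeo : ∀ v₀ v₁ : V, G.Adj v₀ v₁ →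
        u (Sum.inl v₀) < y' → u (Sum.inr v₀) < y' →
        ¬ (u (Sum.inl v₁) < y') → ¬ (u (Sum.inr v₁) < y') → False := by
      intro v₀ v₁ hadj h1 h2 h3 h4
      have h3' : y' < u (Sum.inl v₁) := hout _ h3
      have h4' : y' < u (Sum.inr v₁) := hout _ h4
      have hb0l := hbounds (Sum.inl v₀)
      have hb0r := hbounds (Sum.inr v₀)
      have hb1l := hbounds (Sum.inl v₁)
      have hb1r := hbounds (Sum.inr v₁)
      have hPQ : u (Sum.inl v₁) ≠ u (Sum.inr v₁) := by
        intro h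
        exact absurd (huinj h) (by simp)
      have hxor := ((R.adj v₀ v₁).mp hadj).2
      rw [← hup v₁, ← huq v₁, ← hup v₀, ← huq v₀] at hxor
      rcases lt_or_gt_of_ne hPQ with hlt | hgt
      · have hf1 : ¬ sbtw ((u (Sum.inl v₁) : ℝ) : Circ) ((u (Sum.inl v₀) : ℝ) : Circ)
            ((u (Sum.inr v₁) : ℝ) : Circ) :=
          Stmt6Aux.nsbtw_of_lt (by linarith) hlt (by linarith)
        have hf2 : ¬ sbtw ((u (Sum.inl v₁) : ℝ) : Circ) ((u (Sum.inr v₀) : ℝ) : Circ)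
            ((u (Sum.inr v₁) : ℝ) : Circ) :=
          Stmt6Aux.nsbtw_of_lt (by linarith) hlt (by linarith)
        exact hxor.elim (fun h => hf1 h.1) (fun h => hf2 h.1)
      · have ht1 : sbtw ((u (Sum.inl v₁) : ℝ) : Circ) ((u (Sum.inl v₀) : ℝ) : Circ)
            ((u (Sum.inr v₁) : ℝ) : Circ) := by
          have hs := Stmt6Aux.sbtw_of_lt (X := u (Sum.inl v₁)) (Y := u (Sum.inl v₀) + 1)
            (Z := u (Sum.inr v₁) + 1) (by linarith) (by linarith) (by linarith)
          rwa [Stmt6Aux.coe_add_one, Stmt6Aux.coe_add_one] at hs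
        have ht2 : sbtw ((u (Sum.inl v₁) : ℝ) : Circ) ((u (Sum.inr v₀) : ℝ) : Circ)
            ((u (Sum.inr v₁) : ℝ) : Circ) := by
          have hs := Stmt6Aux.sbtw_of_lt (X := u (Sum.inl v₁)) (Y := u (Sum.inr v₀) + 1)
            (Z := u (Sum.inr v₁) + 1) (by linarith) (by linarith) (by linarith)
          rwa [Stmt6Aux.coe_add_one, Stmt6Aux.coe_add_one] at hs
        rcases hxor with ⟨_, hn2⟩ | ⟨_, hn1⟩
        · exact hn2 ht2
        · exact hn1 ht1
    -- per-vertex endpoint count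
    set cnt : V → ℕ := fun v =>
      (if u (Sum.inl v) < y' then 1 else 0) + (if u (Sum.inr v) < y' then 1 else 0) with hcntdef
    have hcntle : ∀ v, cnt v ≤ 2 := by
      intro v
      simp only [hcntdef]
      split_ifs <;> omega
    -- decompose the count of inside endpoints with property p over the two sides
    have hdecomp : ∀ (p : V → Prop), (hp : DecidablePred p) →
        (Finset.univ.filter (fun w : V ⊕ V => u w < y' ∧ p (Sum.elim id id w))).card =
        (Finset.univ.filter (fun v : V => u (Sum.inl v) < y' ∧ p v)).card +
        (Finset.univ.filter (fun v : V => u (Sum.inr v) < y' ∧ p v)).card := by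
      intro p hp
      have e : {w : V ⊕ V // u w < y' ∧ p (Sum.elim id id w)} ≃
          {v : V // u (Sum.inl v) < y' ∧ p v} ⊕ {v : V // u (Sum.inr v) < y' ∧ p v} :=
        Equiv.subtypeSum.trans (Equiv.sumCongr
          (Equiv.subtypeEquivRight (fun v => Iff.rfl))
          (Equiv.subtypeEquivRight (fun v => Iff.rfl)))
      rw [← Fintype.card_subtype, ← Fintype.card_subtype, ← Fintype.card_subtype,
        Fintype.card_congr e, Fintype.card_sum]
    -- the sums over AF and BF
    have hsum_of : ∀ (p : V → Prop), (hp : DecidablePred p) →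
        (Finset.univ.filter (fun w : V ⊕ V => u w < y' ∧ p (Sum.elim id id w))).card =
        ∑ v ∈ Finset.univ.filter (fun v : V => p v), cnt v := by
      intro p hp
      rw [hdecomp p hp]
      have e1 : (Finset.univ.filter (fun v : V => u (Sum.inl v) < y' ∧ p v)) =
          (Finset.univ.filter (fun v : V => p v)).filter (fun v => u (Sum.inl v) < y') := by
        rw [Finset.filter_filter]
        apply Finset.filter_congr
        intro v _
        tauto
      have e2 : (Finset.univ.filter (fun v : V => u (Sum.inr v) < y' ∧ p v)) =
          (Finset.univ.filter (fun v : V => p v)).filter (fun v => u (Sum.inr v) < y') := by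
        rw [Finset.filter_filter]
        apply Finset.filter_congr
        intro v _
        tauto
      rw [e1, e2, Finset.card_filter, Finset.card_filter, ← Finset.sum_add_distrib]
    have hsumA : ∑ v ∈ AF, cnt v = AF.card := by
      have h1 := hsum_of (fun v => v ∈ A) (by infer_instance)
      rw [← hAF] at h1
      rw [← h1, hcnt, hk]
    have hsumB : ∑ v ∈ BF, cnt v = BF.card := by
      have h1 := hsum_of (fun v => v ∉ A) (by infer_instance)
      rw [← hBF] at h1
      rw [← h1]
      have hsplit := Finset.card_filter_add_card_filter_not
        (s := Finset.univ.filter (fun w : V ⊕ V => u w < y'))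
        (p := fun w : V ⊕ V => Sum.elim id id w ∈ A)
      rw [Finset.filter_filter, Finset.filter_filter] at hsplit
      beta_reduce at hsplit
      omega
    have hgeoA : ∀ v₀ v₁, v₀ ∈ AF → v₁ ∈ AF → v₀ ≠ v₁ → cnt v₀ = 2 → cnt v₁ = 0 → False := by
      intro v₀ v₁ hv₀ hv₁ hvne h2 h0
      rw [hAF, Finset.mem_filter] at hv₀ hv₁
      have hadj := hA v₀ hv₀.2 v₁ hv₁.2 hvne
      simp only [hcntdef] at h2 h0
      by_cases g1 : u (Sum.inl v₀) < y' <;> by_cases g2 : u (Sum.inr v₀) < y' <;>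
        by_cases g3 : u (Sum.inl v₁) < y' <;> by_cases g4 : u (Sum.inr v₁) < y' <;>
        simp only [g1, g2, g3, g4, if_true, if_false] at h2 h0 <;>
        first
          | omega
          | exact hgeo v₀ v₁ hadj g1 g2 g3 g4
    have hgeoB : ∀ v₀ v₁, v₀ ∈ BF → v₁ ∈ BF → v₀ ≠ v₁ → cnt v₀ = 2 → cnt v₁ = 0 → False := by
      intro v₀ v₁ hv₀ hv₁ hvne h2 h0
      rw [hBF, Finset.mem_filter] at hv₀ hv₁
      have hadj := hB v₀ hv₀.2 v₁ hv₁.2 hvne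
      simp only [hcntdef] at h2 h0
      by_cases g1 : u (Sum.inl v₀) < y' <;> by_cases g2 : u (Sum.inr v₀) < y' <;>
        by_cases g3 : u (Sum.inl v₁) < y' <;> by_cases g4 : u (Sum.inr v₁) < y' <;>
        simp only [g1, g2, g3, g4, if_true, if_false] at h2 h0 <;>
        first
          | omega
          | exact hgeo v₀ v₁ hadj g1 g2 g3 g4
    have hone : ∀ v : V, cnt v = 1 := by
      intro v
      by_cases hv : v ∈ A
      · exact Stmt6Aux.pigeon AF cnt hcntle hsumA hgeoA v
          (by rw [hAF, Finset.mem_filter]; exact ⟨Finset.mem_univ v, hv⟩)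
      · exact Stmt6Aux.pigeon BF cnt hcntle hsumB hgeoB v
          (by rw [hBF, Finset.mem_filter]; exact ⟨Finset.mem_univ v, hv⟩)
    have hExact : ∀ v : V, (u (Sum.inl v) < y' ∧ y' < u (Sum.inr v)) ∨
        (u (Sum.inr v) < y' ∧ y' < u (Sum.inl v)) := by
      intro v
      have h1 := hone v
      simp only [hcntdef] at h1
      by_cases g1 : u (Sum.inl v) < y' <;> by_cases g2 : u (Sum.inr v) < y' <;>
        simp only [g1, g2, if_true, if_false] at h1
      · omega
      · exact Or.inl ⟨g1, hout _ g2⟩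
      · exact Or.inr ⟨g2, hout _ g1⟩
      · omega
    -- assemble the two corners
    have hxyne : ((x' : ℝ) : Circ) ≠ ((y' : ℝ) : Circ) :=
      Stmt6Aux.coe_ne_coe (ne_of_lt hxy) (abs_sub_lt_iff.mpr ⟨by linarith, by linarith⟩)
    refine ⟨R, {((x' : ℝ) : Circ), ((y' : ℝ) : Circ)}, ?_, ?_, ?_⟩
    · rw [Finset.card_insert_of_notMem (by simp [hxyne]), Finset.card_singleton]
    · -- corners avoid all endpoints
      intro t ht v
      have hbl := hbounds (Sum.inl v)
      have hbr := hbounds (Sum.inr v)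
      rw [← hup v, ← huq v]
      rw [Finset.mem_insert, Finset.mem_singleton] at ht
      rcases ht with rfl | rfl
      · constructor
        · exact Stmt6Aux.coe_ne_coe (ne_of_lt hbl.1) (abs_sub_lt_iff.mpr ⟨by linarith, by linarith⟩)
        · exact Stmt6Aux.coe_ne_coe (ne_of_lt hbr.1) (abs_sub_lt_iff.mpr ⟨by linarith, by linarith⟩)
      · constructor
        · exact Stmt6Aux.coe_ne_coe (Ne.symm hbl.2.2) (abs_sub_lt_iff.mpr ⟨by linarith, by linarith⟩)
        · exact Stmt6Aux.coe_ne_coe (Ne.symm hbr.2.2) (abs_sub_lt_iff.mpr ⟨by linarith, by linarith⟩)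
    · -- every chord separates the corners
      intro v
      have hbl := hbounds (Sum.inl v)
      have hbr := hbounds (Sum.inr v)
      constructor
      · -- true arc
        rcases hExact v with ⟨hin, hfar⟩ | ⟨hin, hfar⟩
        · refine ⟨((y' : ℝ) : Circ), by simp, ?_⟩
          simp only [CircleRep.ArcSet, if_pos, Set.mem_setOf_eq]
          rw [← hup v, ← huq v]
          exact Stmt6Aux.sbtw_of_lt hin hfar (by linarith)
        · refine ⟨((x' : ℝ) : Circ), by simp, ?_⟩
          simp only [CircleRep.ArcSet, if_pos, Set.mem_setOf_eq]
          rw [← hup v, ← huq v]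
          have hs := Stmt6Aux.sbtw_of_lt (X := u (Sum.inl v)) (Y := x' + 1)
            (Z := u (Sum.inr v) + 1) (by linarith) (by linarith) (by linarith)
          rwa [Stmt6Aux.coe_add_one, Stmt6Aux.coe_add_one] at hs
      · -- false arc
        rcases hExact v with ⟨hin, hfar⟩ | ⟨hin, hfar⟩
        · refine ⟨((x' : ℝ) : Circ), by simp, ?_⟩
          simp only [CircleRep.ArcSet, Bool.false_eq_true, if_neg, Set.mem_setOf_eq,
            if_false]
          rw [← hup v, ← huq v]
          have hs := Stmt6Aux.sbtw_of_lt (X := u (Sum.inr v)) (Y := x' + 1)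
            (Z := u (Sum.inl v) + 1) (by linarith) (by linarith) (by linarith)
          rwa [Stmt6Aux.coe_add_one, Stmt6Aux.coe_add_one] at hs
        · refine ⟨((y' : ℝ) : Circ), by simp, ?_⟩
          simp only [CircleRep.ArcSet, Bool.false_eq_true, if_neg, Set.mem_setOf_eq,
            if_false]
          rw [← hup v, ← huq v]
          exact Stmt6Aux.sbtw_of_lt hin hfar (by linarith)
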